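/- Let λ = 2·(1 − L/B)/log(B/L) and, for v ∈ (L, B], define h_v(z) = v·Q*'(v)·(1 − z²) + Q*(v)·(1 − z)² − λ·(1 − z) for z ∈ ℝ, where Q*' denotes the derivative of Q* on (L, B]. Then for every v ∈ (L, B] and every z ∈ [0, 1]: h_v(1 − L/v) ≤ h_v(z). -/

import Mathlib

/-- Pointwise minimization of the Lagrangian integrand in the two-bidder game:
with `λ = 2(1 - L/B)/log(B/L)` and `h_v(z) = v·Q*'(v)·(1 - z²) + Q*(v)·(1 - z)² - λ(1 - z)`
(where `Q*'` is the derivative of `Q*` on `(L, B]`), for every `v ∈ (L, B]` the choice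
`z = 1 - L/v` minimizes `h_v` over `z ∈ [0, 1]`. -/
theorem lagrangian_integrand_min_two_bidders (B μ L : ℝ)
    (hB : 0 < B) (hμ0 : 0 < μ) (hμB : μ < B)
    (hL : L ∈ Set.Ioo (0 : ℝ) B) (hLμ : L * (1 + Real.log (B / L)) = μ)
    (Qs : ℝ → ℝ)
    (hQs : ∀ r, Qs r =
      if r < 0 then 0
      else if r ≤ L then (1 - L / B) / Real.log (B / L)
      else if r ≤ B then (1 - L / B) * (r / (r - L)) * (Real.log (r / L) / Real.log (B / L))
      else 1)
    (lam : ℝ) (hlam : lam = 2 * (1 - L / B) / Real.log (B / L))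
    (h : ℝ → ℝ → ℝ)
    (hh : ∀ v z, h v z = v * (derivWithin Qs (Set.Ioc L B) v) * (1 - z ^ 2)
      + Qs v * (1 - z) ^ 2 - lam * (1 - z)) :
    ∀ v ∈ Set.Ioc L B, ∀ z ∈ Set.Icc (0 : ℝ) 1, h v (1 - L / v) ≤ h v z := by
  intro v hv z hz
  obtain ⟨hL0, hLB⟩ := hL
  obtain ⟨hLv, hvB⟩ := hv
  have hv0 : 0 < v := hL0.trans hLv
  have hd : 0 < v - L := by linarith
  have hBL1 : 1 < B / L := (one_lt_div hL0).2 hLB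
  have hlg : 0 < Real.log (B / L) := Real.log_pos hBL1
  set c : ℝ := (1 - L / B) / Real.log (B / L) with hc
  have hc0 : 0 < c := by
    apply div_pos _ hlg
    have : L / B < 1 := (div_lt_one hB).2 hLB
    linarith
  set t := Real.log (v / L) with ht
  -- key log inequality: v * t ≥ v - L
  have hvt : v - L ≤ v * t := by
    have h1 : Real.log (L / v) ≤ L / v - 1 := Real.log_le_sub_one_of_pos (div_pos hL0 hv0)
    have h2 : Real.log (L / v) = -t := by
      rw [ht, ← Real.log_inv]
      congr 1
      field_simp
    rw [h2] at h1
    have h3 : 1 - L / v ≤ t := by linarith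
    have := mul_le_mul_of_nonneg_left h3 hv0.le
    have h4 : v * (1 - L / v) = v - L := by field_simp
    linarith [h4 ▸ this]
  set g : ℝ → ℝ := fun r => c * (r / (r - L)) * Real.log (r / L) with hg
  have hgd : HasDerivAt g (c * ((v - L) - L * t) / (v - L) ^ 2) v := by
    have h1 : HasDerivAt (fun r : ℝ => r / (r - L))
        ((1 * (v - L) - v * 1) / (v - L) ^ 2) v :=
      (hasDerivAt_id v).div ((hasDerivAt_id v).sub_const L) (by positivity)
    have h2 : HasDerivAt (fun r : ℝ => Real.log (r / L)) ((v / L)⁻¹ * (1 / L)) v :=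
      (Real.hasDerivAt_log (by positivity)).comp v ((hasDerivAt_id v).div_const L)
    have := (h1.const_mul c).mul h2
    refine this.congr_deriv ?_
    have hL0' : L ≠ 0 := hL0.ne'
    rw [ht]
    field_simp
    ring
  have hQg : Set.EqOn Qs g (Set.Ioc L B) := by
    intro r hr
    rw [hQs r, if_neg (by push_neg; linarith [hr.1]), if_neg (not_le.2 hr.1), if_pos hr.2, hg]
    ring
  have hderiv : derivWithin Qs (Set.Ioc L B) v = c * ((v - L) - L * t) / (v - L) ^ 2 := by
    rw [derivWithin_congr hQg (hQg ⟨hLv, hvB⟩)]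
    exact hgd.hasDerivWithinAt.derivWithin (uniqueDiffOn_Ioc L B v ⟨hLv, hvB⟩)
  have hQv : Qs v = c * v * t / (v - L) := by
    rw [hQs v, if_neg (by push_neg; linarith), if_neg (not_le.2 hLv), if_pos hvB, hc, ht]
    ring
  have hlamc : lam = 2 * c := by rw [hlam, hc]; ring
  rw [hh, hh, hderiv, hQv, hlamc, ← sub_nonneg]
  have hident :
      v * (c * ((v - L) - L * t) / (v - L) ^ 2) * (1 - z ^ 2)
        + c * v * t / (v - L) * (1 - z) ^ 2 - 2 * c * (1 - z)
        - (v * (c * ((v - L) - L * t) / (v - L) ^ 2) * (1 - (1 - L / v) ^ 2)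
        + c * v * t / (v - L) * (1 - (1 - L / v)) ^ 2 - 2 * c * (1 - (1 - L / v)))
      = c * v * (v * t - (v - L)) / (v - L) ^ 2 * (z - (1 - L / v)) ^ 2 := by
    field_simp
    ring
  rw [hident]
  apply mul_nonneg _ (sq_nonneg _)
  apply div_nonneg _ (by positivity)
  have : 0 ≤ v * t - (v - L) := by linarith
  positivity
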